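/- arXiv:math/0401175 — 7 statements merged into one kernel-verified Lean document; each statement's English description precedes it below -/
import Mathlib

section
/- For any 0/1-labeling of a rooted binary tree T with n nodes, the inequality (b00 − b01)/2 + b10 ≤ (n+1)/2 holds; equivalently, b00 − b01 + 2·b10 ≤ n + 1. -/
/-- A rooted tree on `Fin n` with root `0`, given by a parent function.
Every non-root node's parent has a smaller index, which makes the graph acyclic
and connected to the root. -/
structure PhyloTree (n : ℕ) where
  parent : Fin n → Fin n
  root_fixed : ∀ v : Fin n, v.val = 0 → parent v = v
  parent_lt : ∀ v : Fin n, v.val ≠ 0 → (parent v).val < v.val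

namespace PhyloTree

variable {n : ℕ}

/-- Transition count `b ℓ i j`: the number of edges from a parent labeled `i`
to a child labeled `j`, for the `0/1`-labeling `ℓ`. -/
def b (T : PhyloTree n) (ℓ : Fin n → Fin 2) (i j : Fin 2) : ℕ :=
  (Finset.univ.filter (fun v : Fin n =>
    v.val ≠ 0 ∧ ℓ (T.parent v) = i ∧ ℓ v = j)).card

/-- The set of children of a node. -/
def children (T : PhyloTree n) (v : Fin n) : Finset (Fin n) :=
  Finset.univ.filter (fun w => w.val ≠ 0 ∧ T.parent w = v)

/-- A leaf is a node with no children. -/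
def IsLeaf (T : PhyloTree n) (v : Fin n) : Prop := T.children v = ∅

instance (T : PhyloTree n) (v : Fin n) : Decidable (T.IsLeaf v) :=
  inferInstanceAs (Decidable (T.children v = ∅))

/-- A rooted tree is binary if every non-leaf node has exactly two children. -/
def IsBinary (T : PhyloTree n) : Prop :=
  ∀ v : Fin n, T.IsLeaf v ∨ (T.children v).card = 2

/-- The finset of leaves. -/
def leaves (T : PhyloTree n) : Finset (Fin n) :=
  Finset.univ.filter (fun v => T.IsLeaf v)

end PhyloTree

open Finset

/-- Counting nodes whose parent satisfies `P` by summing children counts. -/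
lemma card_parent {n : ℕ} (T : PhyloTree n) (P : Fin n → Prop) [DecidablePred P] :
    (Finset.univ.filter (fun v : Fin n => v.val ≠ 0 ∧ P (T.parent v))).card
      = ∑ w ∈ Finset.univ.filter P, (T.children w).card := by
  rw [← Finset.card_biUnion]
  · congr 1
    ext v
    simp only [Finset.mem_biUnion, Finset.mem_filter, Finset.mem_univ, true_and,
      PhyloTree.children]
    constructor
    · rintro ⟨h0, hP⟩; exact ⟨_, hP, h0, rfl⟩
    · rintro ⟨w, hP, h0, rfl⟩; exact ⟨h0, hP⟩
  · intro x hx y hy hxy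
    simp only [Finset.disjoint_left, PhyloTree.children, Finset.mem_filter, Finset.mem_univ,
      true_and]
    rintro a ⟨h1, rfl⟩ ⟨h2, h3⟩
    exact hxy h3

/-- In a binary tree, the sum of children counts over nodes satisfying `P` is
twice the number of internal nodes satisfying `P`. -/
lemma sum_children {n : ℕ} (T : PhyloTree n) (hT : T.IsBinary)
    (P : Fin n → Prop) [DecidablePred P] :
    ∑ w ∈ Finset.univ.filter P, (T.children w).card
      = 2 * (Finset.univ.filter (fun v => P v ∧ ¬ T.IsLeaf v)).card := by
  have h1 : ∑ w ∈ Finset.univ.filter P, (T.children w).card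
      = ∑ w ∈ Finset.univ.filter P, (if T.IsLeaf w then 0 else 2) := by
    refine Finset.sum_congr rfl fun w _ => ?_
    split_ifs with hl
    · rw [hl]; simp
    · rcases hT w with h | h
      · exact absurd h hl
      · exact h
  rw [h1]
  rw [← Finset.filter_filter]
  rw [Finset.card_filter]
  rw [Finset.mul_sum]
  refine Finset.sum_congr rfl fun w _ => ?_
  split_ifs with hl <;> simp

/-- Splitting a finset by the value of a `Fin 2`-valued function. -/
lemma split2 {α : Type*} (s : Finset α) (f : α → Fin 2) [DecidableEq α] :
    (s.filter (fun v => f v = 0)).card + (s.filter (fun v => f v = 1)).card = s.card := by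
  have h : ∀ x : Fin 2, (x = 1) ↔ ¬(x = 0) := by decide
  simp only [h]
  exact Finset.card_filter_add_card_filter_not _

/-- For a binary tree with n nodes, b00 − b01 + 2·b10 ≤ n + 1. -/
theorem stmt2 {n : ℕ} (T : PhyloTree n) (hT : T.IsBinary) (ℓ : Fin n → Fin 2) :
    (T.b ℓ 0 0 : ℤ) - T.b ℓ 0 1 + 2 * T.b ℓ 1 0 ≤ n + 1 := by
  rcases Nat.eq_zero_or_pos n with hn | hn
  · subst hn
    simp [PhyloTree.b]
  classical
  set I0 := (Finset.univ.filter (fun v : Fin n => ℓ v = 0 ∧ ¬ T.IsLeaf v)).card with hI0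
  set I1 := (Finset.univ.filter (fun v : Fin n => ℓ v = 1 ∧ ¬ T.IsLeaf v)).card with hI1
  set N1 := (Finset.univ.filter (fun v : Fin n => ℓ v = 1)).card with hN1
  -- key identity: b i 0 + b i 1 = 2 * (# internal nodes labeled i)
  have key : ∀ i : Fin 2, T.b ℓ i 0 + T.b ℓ i 1
      = 2 * (Finset.univ.filter (fun v : Fin n => ℓ v = i ∧ ¬ T.IsLeaf v)).card := by
    intro i
    have hb : ∀ j : Fin 2, T.b ℓ i j
        = ((Finset.univ.filter (fun v : Fin n => v.val ≠ 0 ∧ ℓ (T.parent v) = i)).filter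
            (fun v => ℓ v = j)).card := by
      intro j
      rw [Finset.filter_filter]
      simp only [PhyloTree.b, and_assoc]
    rw [hb 0, hb 1, split2, card_parent T (fun w => ℓ w = i), sum_children T hT]
  have hA0 := key 0
  have hA1 := key 1
  rw [← hI0] at hA0
  rw [← hI1] at hA1
  -- bound: N1 ≤ b 0 1 + b 1 1 + 1
  have hB : N1 ≤ T.b ℓ 0 1 + T.b ℓ 1 1 + 1 := by
    have hsplit : ((Finset.univ.filter (fun v : Fin n => ℓ v = 1)).filter
          (fun v => v.val ≠ 0)).card
        + ((Finset.univ.filter (fun v : Fin n => ℓ v = 1)).filter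
          (fun v => ¬ (v.val ≠ 0))).card = N1 :=
      Finset.card_filter_add_card_filter_not _
    have h1 : ((Finset.univ.filter (fun v : Fin n => ℓ v = 1)).filter
          (fun v => v.val ≠ 0)).card = T.b ℓ 0 1 + T.b ℓ 1 1 := by
      have hb : ∀ i : Fin 2, T.b ℓ i 1
          = (((Finset.univ.filter (fun v : Fin n => ℓ v = 1)).filter
              (fun v => v.val ≠ 0)).filter (fun v => ℓ (T.parent v) = i)).card := by
        intro i
        rw [Finset.filter_filter, Finset.filter_filter]
        simp only [PhyloTree.b]
        congr 1
        apply Finset.filter_congr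
        intro v _
        tauto
      rw [hb 0, hb 1, split2]
    have h2 : ((Finset.univ.filter (fun v : Fin n => ℓ v = 1)).filter
          (fun v => ¬ (v.val ≠ 0))).card ≤ 1 := by
      apply Finset.card_le_one.mpr
      intro a ha b hb
      simp only [Finset.mem_filter, not_not] at ha hb
      apply Fin.ext
      omega
    omega
  -- bound: I1 ≤ N1
  have hC : I1 ≤ N1 := by
    apply Finset.card_le_card
    intro v hv
    simp only [Finset.mem_filter] at hv ⊢
    exact ⟨hv.1, hv.2.1⟩
  -- bound: 2 * I0 + 2 * I1 + 1 ≤ n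
  have hD : 2 * I0 + 2 * I1 + 1 ≤ n := by
    have htot : (Finset.univ.filter (fun v : Fin n => v.val ≠ 0 ∧ True)).card
        = 2 * (Finset.univ.filter (fun v : Fin n => True ∧ ¬ T.IsLeaf v)).card := by
      rw [card_parent T (fun _ => True), sum_children T hT]
    simp only [and_true, true_and] at htot
    have hII : I0 + I1 = (Finset.univ.filter (fun v : Fin n => ¬ T.IsLeaf v)).card := by
      have h0 : (Finset.univ.filter (fun v : Fin n => ℓ v = 0 ∧ ¬ T.IsLeaf v))
          = (Finset.univ.filter (fun v : Fin n => ¬ T.IsLeaf v)).filter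
              (fun v => ℓ v = 0) := by
        rw [Finset.filter_filter]
        apply Finset.filter_congr
        intro v _; tauto
      have h1 : (Finset.univ.filter (fun v : Fin n => ℓ v = 1 ∧ ¬ T.IsLeaf v))
          = (Finset.univ.filter (fun v : Fin n => ¬ T.IsLeaf v)).filter
              (fun v => ℓ v = 1) := by
        rw [Finset.filter_filter]
        apply Finset.filter_congr
        intro v _; tauto
      rw [hI0, hI1, h0, h1, split2]
    have hne : (Finset.univ.filter (fun v : Fin n => v.val ≠ 0)).card + 1 ≤ n := by
      have hmem : (⟨0, hn⟩ : Fin n) ∉ Finset.univ.filter (fun v : Fin n => v.val ≠ 0) := by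
        simp
      have hss : (Finset.univ.filter (fun v : Fin n => v.val ≠ 0)) ⊂ Finset.univ := by
        apply Finset.ssubset_univ_iff.mpr
        intro h
        rw [h] at hmem
        exact hmem (Finset.mem_univ _)
      have hlt : (Finset.univ.filter (fun v : Fin n => v.val ≠ 0)).card < n := by
        simpa using Finset.card_lt_card hss
      omega
    omega
  omega
end

section
/- For any 0/1-labeling of a rooted binary tree T with n nodes, equality (b00 − b01)/2 + b10 = (n+1)/2 holds if and only if the root is labeled 1 and every leaf is labeled 0. -/
open Finset in
private lemma fin2cases (x : Fin 2) : x = 0 ∨ x = 1 := by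
  fin_cases x <;> simp

open Finset in
/-- equality b00 − b01 + 2·b10 = n + 1 holds iff the root is labeled 1
and every leaf is labeled 0. -/
theorem stmt3 {n : ℕ} (hn : 0 < n) (T : PhyloTree n) (hT : T.IsBinary)
    (ℓ : Fin n → Fin 2) :
    ((T.b ℓ 0 0 : ℤ) - T.b ℓ 0 1 + 2 * T.b ℓ 1 0 = n + 1)
      ↔ (ℓ ⟨0, hn⟩ = 1 ∧ ∀ v : Fin n, T.IsLeaf v → ℓ v = 0) := by
  classical
  set r : Fin n := ⟨0, hn⟩ with hr
  -- in-edges grouped by parent's label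
  have hA : ∀ j : Fin 2, T.b ℓ 0 j + T.b ℓ 1 j
      = (univ.filter (fun v : Fin n => v.val ≠ 0 ∧ ℓ v = j)).card := by
    intro j
    unfold PhyloTree.b
    simp only [Finset.card_filter]
    rw [← Finset.sum_add_distrib]
    refine Finset.sum_congr rfl fun v _ => ?_
    rcases fin2cases (ℓ (T.parent v)) with h | h <;>
      by_cases hv : v.val = 0 <;> simp [h, hv]
  -- out-edges grouped by child's label
  have hB : ∀ i : Fin 2, T.b ℓ i 0 + T.b ℓ i 1
      = (univ.filter (fun w : Fin n => w.val ≠ 0 ∧ ℓ (T.parent w) = i)).card := by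
    intro i
    unfold PhyloTree.b
    simp only [Finset.card_filter]
    rw [← Finset.sum_add_distrib]
    refine Finset.sum_congr rfl fun v _ => ?_
    rcases fin2cases (ℓ v) with h | h <;>
      by_cases hv : v.val = 0 <;> simp [h, hv, and_comm]
  -- fiberwise count: edges out of i-labeled nodes
  have hC : ∀ i : Fin 2,
      (univ.filter (fun w : Fin n => w.val ≠ 0 ∧ ℓ (T.parent w) = i)).card
      = ∑ v ∈ univ.filter (fun v : Fin n => ℓ v = i), (T.children v).card := by
    intro i
    rw [Finset.card_eq_sum_card_fiberwise
      (f := T.parent) (t := univ.filter (fun v : Fin n => ℓ v = i))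
      (fun w hw => by
        simp only [coe_filter, mem_coe, Set.mem_setOf_eq, mem_filter, mem_univ, true_and] at hw ⊢
        exact hw.2)]
    refine Finset.sum_congr rfl fun v hv => ?_
    simp only [mem_filter, mem_univ, true_and] at hv
    congr 1
    unfold PhyloTree.children
    ext w
    simp only [mem_filter, mem_univ, true_and]
    constructor
    · rintro ⟨⟨h1, _⟩, h3⟩; exact ⟨h1, h3⟩
    · rintro ⟨h1, h3⟩; exact ⟨⟨h1, h3 ▸ hv⟩, h3⟩
  -- binary: the sum of children counts
  have hD : ∀ i : Fin 2,
      ∑ v ∈ univ.filter (fun v : Fin n => ℓ v = i), (T.children v).card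
      = 2 * (univ.filter (fun v : Fin n => ℓ v = i ∧ ¬ T.IsLeaf v)).card := by
    intro i
    have : ∀ v : Fin n, (T.children v).card = if T.IsLeaf v then 0 else 2 := by
      intro v
      rcases hT v with h | h
      · simp [h, PhyloTree.IsLeaf] at h ⊢
        simp [h]
      · have hnl : ¬ T.IsLeaf v := by
          intro hl
          rw [PhyloTree.IsLeaf] at hl
          rw [hl] at h; simp at h
        simp [hnl, h]
    calc ∑ v ∈ univ.filter (fun v : Fin n => ℓ v = i), (T.children v).card
        = ∑ v ∈ univ.filter (fun v : Fin n => ℓ v = i),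
            (if T.IsLeaf v then 0 else 2) := by
          exact Finset.sum_congr rfl fun v _ => this v
      _ = ∑ v ∈ univ.filter (fun v : Fin n => ℓ v = i),
            (if ℓ v = i ∧ ¬ T.IsLeaf v then 2 else 0) := by
          refine Finset.sum_congr rfl fun v hv => ?_
          simp only [mem_filter, mem_univ, true_and] at hv
          by_cases h : T.IsLeaf v <;> simp [h, hv]
      _ = ∑ v ∈ (univ : Finset (Fin n)),
            (if ℓ v = i ∧ ¬ T.IsLeaf v then 2 else 0) := by
          refine Finset.sum_subset (Finset.filter_subset _ _) fun v _ hv => ?_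
          simp only [mem_filter, mem_univ, true_and] at hv
          simp [hv]
      _ = 2 * (univ.filter (fun v : Fin n => ℓ v = i ∧ ¬ T.IsLeaf v)).card := by
          rw [Finset.card_filter, Finset.mul_sum]
          refine Finset.sum_congr rfl fun v _ => ?_
          by_cases h : ℓ v = i ∧ ¬ T.IsLeaf v <;> simp [h]
  -- count of non-root nodes split by label
  have hE : (univ.filter (fun v : Fin n => v.val ≠ 0 ∧ ℓ v = 0)).card
      + (univ.filter (fun v : Fin n => v.val ≠ 0 ∧ ℓ v = 1)).card = n - 1 := by
    have h1 : (univ.filter (fun v : Fin n => v.val ≠ 0)).card = n - 1 := by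
      have : (univ.filter (fun v : Fin n => v.val ≠ 0)) = univ.erase r := by
        ext v
        simp [Fin.ext_iff, hr, eq_comm]
      rw [this, Finset.card_erase_of_mem (mem_univ r), Finset.card_univ, Fintype.card_fin]
    rw [← h1]
    simp only [Finset.card_filter]
    rw [← Finset.sum_add_distrib]
    refine Finset.sum_congr rfl fun v _ => ?_
    rcases fin2cases (ℓ v) with h | h <;> by_cases hv : v.val = 0 <;> simp [h, hv]
  -- total 1-labeled nodes = non-root 1-labeled + root indicator
  have hF : (univ.filter (fun v : Fin n => ℓ v = 1)).card
      = (univ.filter (fun v : Fin n => v.val ≠ 0 ∧ ℓ v = 1)).card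
        + (if ℓ r = 1 then 1 else 0) := by
    have : (if ℓ r = 1 then 1 else 0)
        = (univ.filter (fun v : Fin n => v.val = 0 ∧ ℓ v = 1)).card := by
      have hset : (univ.filter (fun v : Fin n => v.val = 0 ∧ ℓ v = 1))
          = if ℓ r = 1 then {r} else ∅ := by
        ext v
        by_cases h : ℓ r = 1
        · simp only [h, if_true, mem_filter, mem_univ, true_and, mem_singleton]
          constructor
          · rintro ⟨h1, _⟩
            apply Fin.ext; simp [hr, h1]
          · rintro rfl; exact ⟨rfl, h⟩
        · simp only [h, if_false, mem_filter, mem_univ, true_and,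
            Finset.notMem_empty, iff_false]
          rintro ⟨h1, h2⟩
          have hv : v = r := by apply Fin.ext; simp [hr, h1]
          exact h (hv ▸ h2)
      rw [hset]
      by_cases h : ℓ r = 1 <;> simp [h]
    rw [this]
    simp only [Finset.card_filter]
    rw [← Finset.sum_add_distrib]
    refine Finset.sum_congr rfl fun v _ => ?_
    by_cases hv : v.val = 0 <;> simp [hv]
  -- 1-labeled nodes split by leaf
  have hG : (univ.filter (fun v : Fin n => ℓ v = 1)).card
      = (univ.filter (fun v : Fin n => ℓ v = 1 ∧ ¬ T.IsLeaf v)).card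
        + (univ.filter (fun v : Fin n => T.IsLeaf v ∧ ℓ v = 1)).card := by
    simp only [Finset.card_filter]
    rw [← Finset.sum_add_distrib]
    refine Finset.sum_congr rfl fun v _ => ?_
    by_cases h : T.IsLeaf v <;> simp [h]
  -- main identity
  set L1 : ℕ := (univ.filter (fun v : Fin n => T.IsLeaf v ∧ ℓ v = 1)).card with hL1
  set R : ℕ := (if ℓ r = 1 then 1 else 0) with hR
  have key : (T.b ℓ 0 0 : ℤ) - T.b ℓ 0 1 + 2 * T.b ℓ 1 0
      = (n : ℤ) - 1 + 2 * R - 2 * L1 := by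
    have e1 := hA 1
    have e2 := (hB 1).trans ((hC 1).trans (hD 1))
    have e3 := hA 0
    have e4 := hE
    have e5 := hF
    have e6 := hG
    omega
  constructor
  · intro h
    rw [key] at h
    have hRL : R = 1 ∧ L1 = 0 := by
      have hRb : R ≤ 1 := by rw [hR]; split <;> omega
      omega
    have hroot : ℓ r = 1 := by
      by_contra hc
      rw [hR] at hRL
      simp [hc] at hRL
    refine ⟨hroot, fun v hv => ?_⟩
    have : (univ.filter (fun v : Fin n => T.IsLeaf v ∧ ℓ v = 1)) = ∅ :=
      Finset.card_eq_zero.mp hRL.2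
    rcases fin2cases (ℓ v) with h0 | h1
    · exact h0
    · exfalso
      have : v ∈ (∅ : Finset (Fin n)) := by
        rw [← this]; simp [hv, h1]
      simp at this
  · rintro ⟨h1, h2⟩
    rw [key]
    have hR1 : R = 1 := by rw [hR]; simp [h1]
    have hL0 : L1 = 0 := by
      rw [hL1, Finset.card_eq_zero]
      ext v
      simp only [mem_filter, mem_univ, true_and, Finset.notMem_empty, iff_false]
      rintro ⟨hv, hv1⟩
      have := h2 v hv
      rw [this] at hv1
      exact absurd hv1 (by decide)
    rw [hR1, hL0]
    push_cast
    ring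
end

section
/- Let T be a rooted binary tree with n nodes whose labeling has transition vector (b00,b01,b10,b11) = (0, (n−3)/3, 2n/3, 0). Then the root is labeled 1, every leaf is labeled 0, the labeling alternates along every root-to-leaf path (no 0→0 and no 1→1 transitions), and every leaf has odd depth. -/
/-- if a labeling of a binary tree has transition vector
(0, (n−3)/3, 2n/3, 0), then the root is labeled 1, every leaf is labeled 0,
the labeling alternates along every edge, and every leaf has odd depth. -/
theorem stmt5 {n : ℕ} (hn : 0 < n) (T : PhyloTree n) (hT : T.IsBinary)
    (d : Fin n → ℕ) (hd0 : d ⟨0, hn⟩ = 0)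
    (hd : ∀ v : Fin n, v.val ≠ 0 → d v = d (T.parent v) + 1)
    (ℓ : Fin n → Fin 2)
    (h00 : T.b ℓ 0 0 = 0) (h11 : T.b ℓ 1 1 = 0)
    (h01 : 3 * T.b ℓ 0 1 + 3 = n) (h10 : 3 * T.b ℓ 1 0 = 2 * n) :
    ℓ ⟨0, hn⟩ = 1
      ∧ (∀ v : Fin n, T.IsLeaf v → ℓ v = 0)
      ∧ (∀ v : Fin n, v.val ≠ 0 → ℓ v ≠ ℓ (T.parent v))
      ∧ (∀ v : Fin n, T.IsLeaf v → Odd (d v)) := by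
  classical
  -- alternation
  have halt : ∀ v : Fin n, v.val ≠ 0 → ℓ v ≠ ℓ (T.parent v) := by
    intro v hv heq
    have h2 : ∀ i : Fin 2, i = 0 ∨ i = 1 := by decide
    rcases h2 (ℓ v) with h | h
    · have hmem : v ∈ Finset.univ.filter (fun v : Fin n =>
        v.val ≠ 0 ∧ ℓ (T.parent v) = (0 : Fin 2) ∧ ℓ v = 0) := by
        simp only [Finset.mem_filter, Finset.mem_univ, true_and]
        exact ⟨hv, heq ▸ h, h⟩
      have := Finset.card_eq_zero.mp h00
      rw [this] at hmem
      exact absurd hmem (Finset.notMem_empty v)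
    · have hmem : v ∈ Finset.univ.filter (fun v : Fin n =>
        v.val ≠ 0 ∧ ℓ (T.parent v) = (1 : Fin 2) ∧ ℓ v = 1) := by
        simp only [Finset.mem_filter, Finset.mem_univ, true_and]
        exact ⟨hv, heq ▸ h, h⟩
      have := Finset.card_eq_zero.mp h11
      rw [this] at hmem
      exact absurd hmem (Finset.notMem_empty v)
  have h2' : ∀ a b : Fin 2, a ≠ b → a = 1 → b = 0 := by decide
  have h2'' : ∀ a b : Fin 2, a ≠ b → a = 0 → b = 1 := by decide
  -- b 1 0 counts exactly the non-root nodes whose parent is labeled 1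
  have hb10 : T.b ℓ 1 0 =
      (Finset.univ.filter (fun v : Fin n => v.val ≠ 0 ∧ ℓ (T.parent v) = 1)).card := by
    unfold PhyloTree.b
    congr 1
    apply Finset.filter_congr
    intro v _
    constructor
    · rintro ⟨hv, hp, _⟩; exact ⟨hv, hp⟩
    · rintro ⟨hv, hp⟩
      exact ⟨hv, hp, h2' _ _ (fun he => halt v hv (he ▸ hp ▸ rfl)) hp⟩
  -- b 0 1 counts exactly the non-root nodes labeled 1
  have hb01 : T.b ℓ 0 1 =
      (Finset.univ.filter (fun v : Fin n => v.val ≠ 0 ∧ ℓ v = 1)).card := by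
    unfold PhyloTree.b
    congr 1
    apply Finset.filter_congr
    intro v _
    constructor
    · rintro ⟨hv, _, hl⟩; exact ⟨hv, hl⟩
    · rintro ⟨hv, hl⟩
      refine ⟨hv, ?_, hl⟩
      have := halt v hv
      rw [hl] at this
      exact h2' _ _ this rfl
  set S1 : Finset (Fin n) := Finset.univ.filter (fun v => ℓ v = 1) with hS1
  set I1 : Finset (Fin n) := Finset.univ.filter (fun v => ℓ v = 1 ∧ ¬ T.IsLeaf v) with hI1
  set L1 : Finset (Fin n) := Finset.univ.filter (fun v => ℓ v = 1 ∧ T.IsLeaf v) with hL1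
  -- fiberwise count: b 1 0 = 2 * I1.card
  have hcount : T.b ℓ 1 0 = 2 * I1.card := by
    rw [hb10]
    rw [Finset.card_eq_sum_card_fiberwise (f := T.parent) (t := S1)
      (by intro x hx
          simp only [hS1, Finset.mem_coe, Finset.mem_filter, Finset.mem_univ, true_and] at hx ⊢
          exact hx.2)]
    have hfib : ∀ w ∈ S1,
        ((Finset.univ.filter (fun v : Fin n => v.val ≠ 0 ∧ ℓ (T.parent v) = 1)).filter
          (fun v => T.parent v = w)) = T.children w := by
      intro w hw
      simp only [hS1, Finset.mem_filter, Finset.mem_univ, true_and] at hw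
      ext v
      simp only [PhyloTree.children, Finset.mem_filter, Finset.mem_univ, true_and]
      constructor
      · rintro ⟨⟨hv, _⟩, hp⟩; exact ⟨hv, hp⟩
      · rintro ⟨hv, hp⟩; exact ⟨⟨hv, hp ▸ hw⟩, hp⟩
    rw [Finset.sum_congr rfl (fun w hw => by rw [hfib w hw])]
    have hsplit : ∀ w ∈ S1, (T.children w).card = if T.IsLeaf w then 0 else 2 := by
      intro w _
      by_cases hl : T.IsLeaf w
      · simp [hl, PhyloTree.IsLeaf] at hl ⊢
        simp [hl]
      · rcases hT w with h | h
        · exact absurd h hl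
        · simp [hl, h]
    rw [Finset.sum_congr rfl hsplit]
    rw [Finset.sum_ite, Finset.sum_const, Finset.sum_const]
    have : S1.filter (fun w => ¬ T.IsLeaf w) = I1 := by
      ext v
      simp [hS1, hI1, and_assoc, Finset.mem_filter]
    rw [this]
    ring
  -- S1 splits into root part and non-root part, and into I1 and L1
  have hSsplit : (S1.filter (fun v => v.val ≠ 0)).card
      + (S1.filter (fun v => ¬ v.val ≠ 0)).card = S1.card :=
    Finset.card_filter_add_card_filter_not _
  have hnonroot : (S1.filter (fun v => v.val ≠ 0)).card = T.b ℓ 0 1 := by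
    rw [hb01]
    congr 1
    ext v
    simp only [hS1, Finset.mem_filter, Finset.mem_univ, true_and]
    tauto
  set r : ℕ := (S1.filter (fun v => ¬ v.val ≠ 0)).card with hr
  have hrle : r ≤ 1 := by
    apply Finset.card_le_one.mpr
    intro a ha b hb
    simp only [hS1, Finset.mem_filter, Finset.mem_univ, true_and, not_not] at ha hb
    exact Fin.ext (ha.2.trans hb.2.symm)
  have hIL : I1.card + L1.card = S1.card := by
    have := Finset.card_filter_add_card_filter_not
      (s := S1) (p := fun v => ¬ T.IsLeaf v)
    rw [show S1.filter (fun v => ¬ T.IsLeaf v) = I1 by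
        ext v; simp [hS1, hI1, and_assoc, Finset.mem_filter],
      show S1.filter (fun v => ¬¬ T.IsLeaf v) = L1 by
        ext v; simp [hS1, hL1, and_assoc, Finset.mem_filter]] at this
    exact this
  -- arithmetic
  have hn3 : n = 3 * I1.card := by omega
  have harith : T.b ℓ 0 1 + 1 = I1.card := by omega
  have hr1 : r = 1 ∧ L1.card = 0 := by omega
  -- root labeled 1
  have hroot1 : ℓ ⟨0, hn⟩ = 1 := by
    have : (S1.filter (fun v => ¬ v.val ≠ 0)).Nonempty :=
      Finset.card_pos.mp (by omega)
    obtain ⟨v, hv⟩ := this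
    simp only [Finset.mem_filter, not_not, hS1, Finset.mem_univ, true_and] at hv
    have : v = ⟨0, hn⟩ := Fin.ext hv.2
    exact this ▸ hv.1
  -- leaves labeled 0
  have hleaf0 : ∀ v : Fin n, T.IsLeaf v → ℓ v = 0 := by
    intro v hv
    by_contra hne
    have hl1 : ℓ v = 1 := by
      rcases (by decide : ∀ i : Fin 2, i = 0 ∨ i = 1) (ℓ v) with h | h
      · exact absurd h hne
      · exact h
    have : v ∈ L1 := by
      simp only [hL1, Finset.mem_filter, Finset.mem_univ, true_and]
      exact ⟨hl1, hv⟩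
    rw [Finset.card_eq_zero.mp hr1.2] at this
    exact absurd this (Finset.notMem_empty v)
  -- parity of depth
  have hpar : ∀ k : ℕ, ∀ v : Fin n, v.val = k → (Even (d v) ↔ ℓ v = 1) := by
    intro k
    induction k using Nat.strong_induction_on with
    | _ k ih =>
      intro v hvk
      by_cases hv : v.val = 0
      · have hveq : v = ⟨0, hn⟩ := Fin.ext hv
        rw [hveq, hd0, hroot1]
        simp
      · rw [hd v hv]
        have hlt : (T.parent v).val < k := hvk ▸ T.parent_lt v hv
        have hp := ih (T.parent v).val hlt (T.parent v) rfl
        have hne := halt v hv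
        rw [Nat.even_add_one, hp]
        have hiff : ∀ a b : Fin 2, a ≠ b → (¬ b = 1 ↔ a = 1) := by decide
        exact hiff _ _ hne
  have hodd : ∀ v : Fin n, T.IsLeaf v → Odd (d v) := by
    intro v hv
    rw [← Nat.not_even_iff_odd]
    intro he
    have := (hpar v.val v rfl).mp he
    rw [hleaf0 v hv] at this
    exact absurd this (by decide)
  exact ⟨hroot1, hleaf0, halt, hodd⟩
end

section
/- If a rooted binary tree T is completely odd (every leaf is at odd depth from the root) and has n nodes, then n is divisible by 3. -/
/-- a completely odd binary tree (every leaf at odd depth) with n nodes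
has n divisible by 3. -/
theorem stmt6 {n : ℕ} (hn : 0 < n) (T : PhyloTree n) (hT : T.IsBinary)
    (d : Fin n → ℕ) (hd0 : d ⟨0, hn⟩ = 0)
    (hd : ∀ v : Fin n, v.val ≠ 0 → d v = d (T.parent v) + 1)
    (hodd : ∀ v : Fin n, T.IsLeaf v → Odd (d v)) :
    3 ∣ n := by
  classical
  set E := Finset.univ.filter (fun v : Fin n => Even (d v)) with hE
  have hkey : ∀ v ∈ E, (T.children v).card = 2 := by
    intro v hv
    rcases hT v with h | h
    · exfalso
      have hodd' := hodd v h
      simp only [hE, Finset.mem_filter, Finset.mem_univ, true_and] at hv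
      exact (Nat.not_even_iff_odd.mpr hodd') hv
    · exact h
  have hbi : E.biUnion T.children = Finset.univ.filter (fun v => Odd (d v)) := by
    ext v
    simp only [Finset.mem_biUnion, hE, PhyloTree.children, Finset.mem_filter,
      Finset.mem_univ, true_and]
    constructor
    · rintro ⟨u, hu, hv0, hpv⟩
      rw [hd v hv0, hpv]
      exact Even.add_one hu
    · intro hv
      have hv0 : v.val ≠ 0 := by
        intro h0
        have hveq : v = ⟨0, hn⟩ := Fin.ext h0
        rw [hveq, hd0] at hv
        have := Nat.odd_iff.mp hv
        omega
      refine ⟨T.parent v, ?_, hv0, rfl⟩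
      rw [hd v hv0] at hv
      exact Nat.not_odd_iff_even.mp (Nat.odd_add_one.mp hv)
  have hdisj : (E : Set (Fin n)).PairwiseDisjoint T.children := by
    intro u hu u' hu' huu'
    simp only [Finset.disjoint_left]
    intro w hw hw'
    simp only [PhyloTree.children, Finset.mem_filter, Finset.mem_univ, true_and] at hw hw'
    exact huu' (hw.2 ▸ hw'.2 ▸ rfl)
  have hcard : (E.biUnion T.children).card = 2 * E.card := by
    rw [Finset.card_biUnion (fun u hu u' hu' h => hdisj hu hu' h)]
    rw [Finset.sum_congr rfl hkey]
    simp [Nat.mul_comm]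
  have hsplit : E.card + (Finset.univ.filter (fun v : Fin n => Odd (d v))).card = n := by
    have := Finset.card_filter_add_card_filter_not
      (s := (Finset.univ : Finset (Fin n))) (p := fun v => Even (d v))
    simp only [Finset.card_univ, Fintype.card_fin, Nat.not_even_iff_odd] at this
    rw [hE]
    exact this
  rw [← hsplit, ← hbi, hcard]
  omega
end

section
/- Let T be a completely odd rooted binary tree with n nodes. The alternating labeling (nodes at even depth labeled 1, nodes at odd depth labeled 0) has transition counts b00 = 0, b11 = 0, b01 + b10 = n − 1, and moreover b10 = 2n/3 and b01 = (n−3)/3. -/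
/-- on a completely odd binary tree, the alternating labeling
(1 at even depth, 0 at odd depth) has b00 = 0, b11 = 0, b01 + b10 = n − 1,
b10 = 2n/3 and b01 = (n−3)/3. -/
theorem stmt7 {n : ℕ} (hn : 0 < n) (T : PhyloTree n) (hT : T.IsBinary)
    (d : Fin n → ℕ) (hd0 : d ⟨0, hn⟩ = 0)
    (hd : ∀ v : Fin n, v.val ≠ 0 → d v = d (T.parent v) + 1)
    (hodd : ∀ v : Fin n, T.IsLeaf v → Odd (d v)) :
    T.b (fun v => if Even (d v) then 1 else 0) 0 0 = 0
      ∧ T.b (fun v => if Even (d v) then 1 else 0) 1 1 = 0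
      ∧ T.b (fun v => if Even (d v) then 1 else 0) 0 1
          + T.b (fun v => if Even (d v) then 1 else 0) 1 0 = n - 1
      ∧ 3 * T.b (fun v => if Even (d v) then 1 else 0) 1 0 = 2 * n
      ∧ 3 * T.b (fun v => if Even (d v) then 1 else 0) 0 1 + 3 = n := by
  classical
  set ℓ : Fin n → Fin 2 := fun v => if Even (d v) then 1 else 0 with hℓ
  have hpar : ∀ v : Fin n, v.val ≠ 0 → (Even (d (T.parent v)) ↔ ¬ Even (d v)) := by
    intro v hv
    rw [hd v hv]
    simp [Nat.even_add_one]
  have hroot : ∀ v : Fin n, v.val = 0 → Even (d v) := by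
    intro v hv
    have hveq : v = ⟨0, hn⟩ := Fin.ext hv
    rw [hveq, hd0]; exact Even.zero
  have hnotroot : ∀ v : Fin n, ¬ Even (d v) → v.val ≠ 0 := by
    intro v h hv; exact h (hroot v hv)
  set Ev : Finset (Fin n) := Finset.univ.filter (fun v => Even (d v)) with hEv
  set Od : Finset (Fin n) := Finset.univ.filter (fun v => ¬ Even (d v)) with hOd
  -- labeling facts
  have hℓ1 : ∀ v : Fin n, ℓ v = 1 ↔ Even (d v) := by
    intro v; simp only [hℓ]
    by_cases h : Even (d v) <;> simp [h]
  have hℓ0 : ∀ v : Fin n, ℓ v = 0 ↔ ¬ Even (d v) := by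
    intro v; simp only [hℓ]
    by_cases h : Even (d v) <;> simp [h]
  -- b00 = 0
  have hb00 : T.b ℓ 0 0 = 0 := by
    rw [PhyloTree.b, Finset.card_eq_zero, Finset.filter_eq_empty_iff]
    rintro v - ⟨hv, hp, hc⟩
    rw [hℓ0] at hp hc
    exact hp (by rw [hpar v hv]; exact hc)
  -- b11 = 0
  have hb11 : T.b ℓ 1 1 = 0 := by
    rw [PhyloTree.b, Finset.card_eq_zero, Finset.filter_eq_empty_iff]
    rintro v - ⟨hv, hp, hc⟩
    rw [hℓ1] at hp hc
    exact (hpar v hv).mp hp hc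
  -- b10 set = Od
  have hb10 : T.b ℓ 1 0 = Od.card := by
    rw [PhyloTree.b]
    congr 1
    ext v
    simp only [Finset.mem_filter, Finset.mem_univ, true_and, hOd]
    constructor
    · rintro ⟨hv, hp, hc⟩; exact (hℓ0 v).mp hc
    · intro h
      have hv := hnotroot v h
      exact ⟨hv, (hℓ1 _).mpr ((hpar v hv).mpr h), (hℓ0 v).mpr h⟩
  -- b01 set = Ev.erase root
  have hb01 : T.b ℓ 0 1 = (Ev.erase ⟨0, hn⟩).card := by
    rw [PhyloTree.b]
    congr 1
    ext v
    simp only [Finset.mem_filter, Finset.mem_univ, true_and, Finset.mem_erase, hEv]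
    constructor
    · rintro ⟨hv, hp, hc⟩
      exact ⟨fun h => hv (by rw [h]), (hℓ1 v).mp hc⟩
    · rintro ⟨hv0, hve⟩
      have hv' : v.val ≠ 0 := fun h => hv0 (Fin.ext h)
      refine ⟨hv', (hℓ0 _).mpr ?_, (hℓ1 v).mpr hve⟩
      rw [hpar v hv', not_not]; exact hve
  -- each even node has exactly 2 children
  have h2 : ∀ v ∈ Ev, (T.children v).card = 2 := by
    intro v hv
    have hve : Even (d v) := (Finset.mem_filter.mp hv).2
    rcases hT v with hleaf | h2
    · exact absurd hve (Nat.not_even_iff_odd.mpr (hodd v hleaf))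
    · exact h2
  -- Od is the biUnion of children over Ev
  have hbi : Od = Ev.biUnion T.children := by
    ext w
    simp only [hOd, hEv, Finset.mem_filter, Finset.mem_univ, true_and,
      Finset.mem_biUnion, PhyloTree.children]
    constructor
    · intro h
      have hw := hnotroot w h
      exact ⟨T.parent w, (hpar w hw).mpr h, hw, rfl⟩
    · rintro ⟨v, hv, hw0, hpw⟩
      rw [← (hpar w hw0), hpw]; exact hv
  have hdisj : ∀ x ∈ Ev, ∀ y ∈ Ev, x ≠ y → Disjoint (T.children x) (T.children y) := by
    intro x _ y _ hxy
    rw [Finset.disjoint_left]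
    intro w hwx hwy
    simp only [PhyloTree.children, Finset.mem_filter] at hwx hwy
    exact hxy (hwx.2.2 ▸ hwy.2.2)
  have hOdcard : Od.card = 2 * Ev.card := by
    rw [hbi, Finset.card_biUnion hdisj, Finset.sum_congr rfl h2]
    simp [mul_comm]
  have hsum : Ev.card + Od.card = n := by
    rw [hEv, hOd, Finset.card_filter_add_card_filter_not]
    simp
  have hrootmem : (⟨0, hn⟩ : Fin n) ∈ Ev := by
    simp [hEv, hd0]
  have hE1 : 1 ≤ Ev.card := Finset.card_pos.mpr ⟨_, hrootmem⟩
  have herase : (Ev.erase ⟨0, hn⟩).card = Ev.card - 1 :=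
    Finset.card_erase_of_mem hrootmem
  refine ⟨hb00, hb11, ?_, ?_, ?_⟩ <;> simp only [hb01, hb10, herase] <;> omega
end

section
/- Every transition vector (b00,b01,b10,b11) of a 0/1-labeling of a rooted binary tree with n nodes satisfies the six constraints: b_ij ≥ 0 for all i,j; b00+b01+b10+b11 = n−1; b00 − b01 + 2b10 ≤ n+1; and b11 − b10 + 2b01 ≤ n+1. -/
open Finset


lemma split_fin2 {α : Type*} (s : Finset α) (P : α → Prop)
    [DecidablePred P] (f : α → Fin 2) :
    (s.filter fun v => P v ∧ f v = 0).card + (s.filter fun v => P v ∧ f v = 1).card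
      = (s.filter P).card := by
  have h0 : (s.filter fun v => P v ∧ f v = 0)
      = (s.filter P).filter (fun v => ¬ (f v = 1)) := by
    rw [Finset.filter_filter]
    apply Finset.filter_congr
    intro v _
    constructor
    · rintro ⟨h1, h2⟩; exact ⟨h1, by simp [h2]⟩
    · rintro ⟨h1, h2⟩; exact ⟨h1, by omega⟩
  have h1 : (s.filter fun v => P v ∧ f v = 1)
      = (s.filter P).filter (fun v => f v = 1) := by
    rw [Finset.filter_filter]
  rw [h0, h1, Nat.add_comm, Finset.card_filter_add_card_filter_not]

lemma card_filter_congr' {α : Type*} (s : Finset α) (p q : α → Prop)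
    [DecidablePred p] [DecidablePred q] (h : ∀ x, p x ↔ q x) :
    (s.filter p).card = (s.filter q).card := by
  rw [Finset.filter_congr (fun x _ => h x)]

section main
variable {n : ℕ}

lemma card_nonroot (hn : 0 < n) :
    ((Finset.univ : Finset (Fin n)).filter fun v => v.val ≠ 0).card = n - 1 := by
  have h1 : ((Finset.univ : Finset (Fin n)).filter fun v => ¬ v.val ≠ 0) = {⟨0, hn⟩} := by
    ext v
    simp [Fin.ext_iff]
  have h2 := Finset.card_filter_add_card_filter_not
    (s := (Finset.univ : Finset (Fin n))) (p := fun v => v.val ≠ 0)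
  rw [h1] at h2
  simp only [Finset.card_singleton, Finset.card_univ, Fintype.card_fin] at h2
  omega

lemma out_le (hn : 0 < n) (T : PhyloTree n) (hT : T.IsBinary) (ℓ : Fin n → Fin 2)
    (i : Fin 2) :
    T.b ℓ i 0 + T.b ℓ i 1 ≤ 2 * (T.b ℓ 0 i + T.b ℓ 1 i) + 2 := by
  classical
  set E := (Finset.univ : Finset (Fin n)).filter
    (fun v => v.val ≠ 0 ∧ ℓ (T.parent v) = i) with hE
  set N := (Finset.univ : Finset (Fin n)).filter (fun v => ℓ v = i) with hN
  -- out-degree sum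
  have hsplit1 : T.b ℓ i 0 + T.b ℓ i 1 = E.card := by
    rw [← split_fin2 (Finset.univ : Finset (Fin n))
      (fun v => v.val ≠ 0 ∧ ℓ (T.parent v) = i) ℓ]
    unfold PhyloTree.b
    congr 1 <;> exact card_filter_congr' _ _ _ (fun v => by tauto)
  -- in-degree sum
  have hsplit2 : T.b ℓ 0 i + T.b ℓ 1 i
      = ((Finset.univ : Finset (Fin n)).filter fun v => v.val ≠ 0 ∧ ℓ v = i).card := by
    rw [← split_fin2 (Finset.univ : Finset (Fin n))
      (fun v => v.val ≠ 0 ∧ ℓ v = i) (fun v => ℓ (T.parent v))]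
    unfold PhyloTree.b
    congr 1 <;> exact card_filter_congr' _ _ _ (fun v => by tauto)
  -- E.card ≤ 2 * N.card
  have hEN : E.card ≤ 2 * N.card := by
    apply Finset.card_le_mul_card_image_of_maps_to (f := T.parent) (t := N)
    · intro v hv
      rw [hE, Finset.mem_filter] at hv
      rw [hN, Finset.mem_filter]
      exact ⟨Finset.mem_univ _, hv.2.2⟩
    · intro u _
      have hsub : (E.filter fun v => T.parent v = u) ⊆ T.children u := by
        intro v hv
        rw [Finset.mem_filter, hE, Finset.mem_filter] at hv
        rw [PhyloTree.children, Finset.mem_filter]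
        exact ⟨Finset.mem_univ _, hv.1.2.1, hv.2⟩
      have hc := Finset.card_le_card hsub
      rcases hT u with h | h
      · rw [PhyloTree.IsLeaf] at h
        rw [h] at hc
        simpa using hc.trans (by norm_num)
      · omega
  -- N.card ≤ (nonroot i-nodes) + 1
  have hN1 : N.card ≤
      ((Finset.univ : Finset (Fin n)).filter fun v => v.val ≠ 0 ∧ ℓ v = i).card + 1 := by
    have h2 := Finset.card_filter_add_card_filter_not
      (s := N) (p := fun v => v.val ≠ 0)
    have h3 : (N.filter fun v => v.val ≠ 0)
        = ((Finset.univ : Finset (Fin n)).filter fun v => v.val ≠ 0 ∧ ℓ v = i) := by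
      rw [hN, Finset.filter_filter]
      exact Finset.filter_congr (fun v _ => by tauto)
    have h4 : (N.filter fun v => ¬ v.val ≠ 0).card ≤ 1 := by
      have : (N.filter fun v => ¬ v.val ≠ 0) ⊆ {⟨0, hn⟩} := by
        intro v hv
        rw [Finset.mem_filter] at hv
        simp [Fin.ext_iff]
        omega
      simpa using Finset.card_le_card this
    rw [h3] at h2
    omega
  omega

end main


/-- every transition vector of a labeling of a binary tree with n nodes
satisfies: all b_ij ≥ 0, b00+b01+b10+b11 = n−1, b00 − b01 + 2b10 ≤ n+1, and
b11 − b10 + 2b01 ≤ n+1. -/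
theorem stmt14 {n : ℕ} (hn : 0 < n) (T : PhyloTree n) (hT : T.IsBinary)
    (ℓ : Fin n → Fin 2) :
    (∀ i j : Fin 2, 0 ≤ (T.b ℓ i j : ℤ))
      ∧ (T.b ℓ 0 0 : ℤ) + T.b ℓ 0 1 + T.b ℓ 1 0 + T.b ℓ 1 1 = n - 1
      ∧ (T.b ℓ 0 0 : ℤ) - T.b ℓ 0 1 + 2 * T.b ℓ 1 0 ≤ n + 1
      ∧ (T.b ℓ 1 1 : ℤ) - T.b ℓ 1 0 + 2 * T.b ℓ 0 1 ≤ n + 1 := by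
  classical
  have hsum : T.b ℓ 0 0 + T.b ℓ 0 1 + (T.b ℓ 1 0 + T.b ℓ 1 1) = n - 1 := by
    have h0 : T.b ℓ 0 0 + T.b ℓ 0 1
        = ((Finset.univ : Finset (Fin n)).filter
            fun v => v.val ≠ 0 ∧ ℓ (T.parent v) = 0).card := by
      rw [← split_fin2 (Finset.univ : Finset (Fin n))
        (fun v => v.val ≠ 0 ∧ ℓ (T.parent v) = 0) ℓ]
      unfold PhyloTree.b
      congr 1 <;> exact card_filter_congr' _ _ _ (fun v => by tauto)
    have h1 : T.b ℓ 1 0 + T.b ℓ 1 1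
        = ((Finset.univ : Finset (Fin n)).filter
            fun v => v.val ≠ 0 ∧ ℓ (T.parent v) = 1).card := by
      rw [← split_fin2 (Finset.univ : Finset (Fin n))
        (fun v => v.val ≠ 0 ∧ ℓ (T.parent v) = 1) ℓ]
      unfold PhyloTree.b
      congr 1 <;> exact card_filter_congr' _ _ _ (fun v => by tauto)
    rw [h0, h1, split_fin2 (Finset.univ : Finset (Fin n))
      (fun v : Fin n => v.val ≠ 0) (fun v => ℓ (T.parent v)), card_nonroot hn]
  have h0 := out_le hn T hT ℓ 0
  have h1 := out_le hn T hT ℓ 1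
  refine ⟨fun i j => Int.ofNat_nonneg _, ?_, ?_, ?_⟩ <;> push_cast <;> omega
end

section
/- For any 0/1-labeling of a rooted binary tree T with n nodes, the quantity (b11 − b10)/2 + b01 equals the number of leaves labeled 1 minus the indicator that the root is labeled 1, and hence is at most (n+1)/2. -/
open Finset

/-- Counting non-root vertices whose parent satisfies `P` equals summing the
number of children over vertices satisfying `P`. -/
lemma card_filter_parent {n : ℕ} (T : PhyloTree n) (P : Fin n → Prop)
    [DecidablePred P] :
    (univ.filter (fun v : Fin n => v.val ≠ 0 ∧ P (T.parent v))).card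
      = ∑ u ∈ univ.filter P, (T.children u).card := by
  rw [Finset.card_eq_sum_card_fiberwise
      (f := T.parent) (t := univ.filter P)
      (fun v hv => by
        simp only [coe_filter, Set.mem_setOf_eq, mem_filter, mem_univ, true_and] at hv ⊢
        exact hv.2)]
  refine Finset.sum_congr rfl fun u hu => ?_
  congr 1
  ext w
  simp only [PhyloTree.children, mem_filter, mem_univ, true_and] at hu ⊢
  constructor
  · rintro ⟨⟨h1, _⟩, h3⟩; exact ⟨h1, h3⟩
  · rintro ⟨h1, h3⟩; exact ⟨⟨h1, h3 ▸ hu⟩, h3⟩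

/-- In a binary tree, summing children counts gives twice the number of
internal (non-leaf) vertices. -/
lemma sum_children_card {n : ℕ} (T : PhyloTree n) (hT : T.IsBinary)
    (s : Finset (Fin n)) :
    ∑ u ∈ s, (T.children u).card
      = 2 * (s.filter (fun u => ¬ T.IsLeaf u)).card := by
  rw [← Finset.sum_filter_add_sum_filter_not s (fun u => T.IsLeaf u)]
  have h0 : ∑ u ∈ s.filter (fun u => T.IsLeaf u), (T.children u).card = 0 :=
    Finset.sum_eq_zero fun u hu => by
      have h := (Finset.mem_filter.mp hu).2
      rw [PhyloTree.IsLeaf] at h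
      simp [h]
  have h2 : ∑ u ∈ s.filter (fun u => ¬ T.IsLeaf u), (T.children u).card
      = 2 * (s.filter (fun u => ¬ T.IsLeaf u)).card := by
    rw [Finset.sum_congr rfl (fun u hu => ?_), Finset.sum_const, smul_eq_mul,
      Nat.mul_comm]
    have h := (Finset.mem_filter.mp hu).2
    rcases hT u with h' | h'
    · exact absurd h' h
    · exact h'
  omega

lemma fin2_card_split {α : Type*} [DecidableEq α] (s : Finset α) (g : α → Fin 2) :
    (s.filter (fun v => g v = 1)).card + (s.filter (fun v => g v = 0)).card
      = s.card := by
  have h : ∀ x : Fin 2, ¬ (x = 1) ↔ x = 0 := by decide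
  rw [show (s.filter (fun v => g v = 0)) = s.filter (fun v => ¬ (g v = 1)) by
    apply Finset.filter_congr; intro v _; simp [h]]
  exact Finset.card_filter_add_card_filter_not _

/-- b11 − b10 + 2·b01 = 2·(#leaves labeled 1) − 2·[root labeled 1],
and hence b11 − b10 + 2·b01 ≤ n + 1. -/
theorem stmt15 {n : ℕ} (hn : 0 < n) (T : PhyloTree n) (hT : T.IsBinary)
    (ℓ : Fin n → Fin 2) :
    ((T.b ℓ 1 1 : ℤ) - T.b ℓ 1 0 + 2 * T.b ℓ 0 1
        = 2 * ((T.leaves.filter (fun v => ℓ v = 1)).card : ℤ)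
          - 2 * (if ℓ ⟨0, hn⟩ = 1 then 1 else 0))
      ∧ (T.b ℓ 1 1 : ℤ) - T.b ℓ 1 0 + 2 * T.b ℓ 0 1 ≤ n + 1 := by
  classical
  -- Notation
  set I1 : ℕ := (univ.filter (fun u : Fin n => ℓ u = 1 ∧ ¬ T.IsLeaf u)).card with hI1
  set L1 : ℕ := (T.leaves.filter (fun v => ℓ v = 1)).card with hL1
  set N1 : ℕ := (univ.filter (fun u : Fin n => ℓ u = 1)).card with hN1
  set r : ℕ := (if ℓ ⟨0, hn⟩ = 1 then 1 else 0) with hr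
  -- h1 : b11 + b10 = 2 * I1
  have h1 : T.b ℓ 1 1 + T.b ℓ 1 0 = 2 * I1 := by
    have hsplit := fin2_card_split
      (univ.filter (fun v : Fin n => v.val ≠ 0 ∧ ℓ (T.parent v) = 1)) ℓ
    have e1 : (univ.filter (fun v : Fin n => v.val ≠ 0 ∧ ℓ (T.parent v) = 1)).filter
        (fun v => ℓ v = 1) = univ.filter (fun v : Fin n =>
          v.val ≠ 0 ∧ ℓ (T.parent v) = 1 ∧ ℓ v = 1) := by
      rw [Finset.filter_filter]; apply Finset.filter_congr; intro v _; tauto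
    have e0 : (univ.filter (fun v : Fin n => v.val ≠ 0 ∧ ℓ (T.parent v) = 1)).filter
        (fun v => ℓ v = 0) = univ.filter (fun v : Fin n =>
          v.val ≠ 0 ∧ ℓ (T.parent v) = 1 ∧ ℓ v = 0) := by
      rw [Finset.filter_filter]; apply Finset.filter_congr; intro v _; tauto
    rw [e1, e0] at hsplit
    have hcp := card_filter_parent T (fun u => ℓ u = 1)
    have hsum := sum_children_card T hT (univ.filter (fun u : Fin n => ℓ u = 1))
    rw [Finset.filter_filter] at hsum
    rw [PhyloTree.b, PhyloTree.b, hsplit, hcp, hsum, hI1]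
  -- h2 : b11 + b01 + r = N1
  have h2 : T.b ℓ 1 1 + T.b ℓ 0 1 + r = N1 := by
    have hsplit := fin2_card_split
      (univ.filter (fun v : Fin n => v.val ≠ 0 ∧ ℓ v = 1))
      (fun v => ℓ (T.parent v))
    have e1 : (univ.filter (fun v : Fin n => v.val ≠ 0 ∧ ℓ v = 1)).filter
        (fun v => ℓ (T.parent v) = 1) = univ.filter (fun v : Fin n =>
          v.val ≠ 0 ∧ ℓ (T.parent v) = 1 ∧ ℓ v = 1) := by
      rw [Finset.filter_filter]; apply Finset.filter_congr; intro v _; tauto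
    have e0 : (univ.filter (fun v : Fin n => v.val ≠ 0 ∧ ℓ v = 1)).filter
        (fun v => ℓ (T.parent v) = 0) = univ.filter (fun v : Fin n =>
          v.val ≠ 0 ∧ ℓ (T.parent v) = 0 ∧ ℓ v = 1) := by
      rw [Finset.filter_filter]; apply Finset.filter_congr; intro v _; tauto
    rw [e1, e0] at hsplit
    -- split N1 by whether v is the root
    have hsplit2 := Finset.card_filter_add_card_filter_not
      (s := univ.filter (fun u : Fin n => ℓ u = 1))
      (p := fun v : Fin n => v.val ≠ 0)
    rw [Finset.filter_filter, Finset.filter_filter] at hsplit2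
    have eB : univ.filter (fun v : Fin n => ℓ v = 1 ∧ v.val ≠ 0)
        = univ.filter (fun v : Fin n => v.val ≠ 0 ∧ ℓ v = 1) := by
      apply Finset.filter_congr; intro v _; tauto
    have eR : (univ.filter (fun v : Fin n => ℓ v = 1 ∧ ¬ v.val ≠ 0)).card = r := by
      rw [hr]
      split_ifs with h
      · rw [show univ.filter (fun v : Fin n => ℓ v = 1 ∧ ¬ v.val ≠ 0)
            = {(⟨0, hn⟩ : Fin n)} by
          ext v
          simp only [mem_filter, mem_univ, true_and, mem_singleton, not_not]
          constructor
          · rintro ⟨_, h0⟩; exact Fin.ext h0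
          · rintro rfl; exact ⟨h, rfl⟩]
        simp
      · rw [Finset.card_eq_zero]
        ext v
        simp only [mem_filter, mem_univ, true_and, not_not, notMem_empty,
          iff_false, not_and]
        intro h1 h0
        exact h (by rwa [show (⟨0, hn⟩ : Fin n) = v from Fin.ext h0.symm])
    rw [eB] at hsplit2
    rw [PhyloTree.b, PhyloTree.b, hN1, ← hsplit2, ← eR, hsplit]
  -- h3 : N1 = L1 + I1
  have h3 : N1 = L1 + I1 := by
    have hsplit := Finset.card_filter_add_card_filter_not
      (s := univ.filter (fun u : Fin n => ℓ u = 1))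
      (p := fun v : Fin n => T.IsLeaf v)
    rw [Finset.filter_filter, Finset.filter_filter] at hsplit
    have eL : (T.leaves.filter (fun v => ℓ v = 1))
        = univ.filter (fun v : Fin n => ℓ v = 1 ∧ T.IsLeaf v) := by
      rw [PhyloTree.leaves, Finset.filter_filter]
      apply Finset.filter_congr; intro v _; tauto
    rw [hN1, hL1, hI1, eL, ← hsplit]
  -- h5 : 2 * leaves.card = n + 1
  have h5 : 2 * T.leaves.card = n + 1 := by
    have hcp := card_filter_parent T (fun _ : Fin n => True)
    have hsum := sum_children_card T hT (univ.filter (fun _ : Fin n => True))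
    rw [hsum] at hcp
    have e1 : (univ.filter (fun v : Fin n => v.val ≠ 0 ∧ True))
        = univ.filter (fun v : Fin n => v.val ≠ 0) := by
      apply Finset.filter_congr; intro v _; tauto
    have hroot : (univ.filter (fun v : Fin n => v.val ≠ 0)).card + 1 = n := by
      have hsplit := Finset.card_filter_add_card_filter_not
        (s := (univ : Finset (Fin n))) (p := fun v : Fin n => v.val ≠ 0)
      have eR : (univ.filter (fun v : Fin n => ¬ v.val ≠ 0)) = {(⟨0, hn⟩ : Fin n)} := by
        ext v
        simp only [mem_filter, mem_univ, true_and, not_not, mem_singleton]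
        exact ⟨fun h0 => Fin.ext h0, fun h0 => by rw [h0]⟩
      rw [eR] at hsplit
      simpa using hsplit
    have hleaf : (univ.filter (fun u : Fin n => True ∧ ¬ T.IsLeaf u)).card
        + T.leaves.card = n := by
      have hsplit := Finset.card_filter_add_card_filter_not
        (s := (univ : Finset (Fin n))) (p := fun v : Fin n => T.IsLeaf v)
      have e2 : (univ.filter (fun u : Fin n => True ∧ ¬ T.IsLeaf u))
          = univ.filter (fun u : Fin n => ¬ T.IsLeaf u) := by
        apply Finset.filter_congr; intro v _; tauto
      rw [e2, PhyloTree.leaves]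
      simpa [Nat.add_comm] using hsplit
    rw [Finset.filter_filter] at hcp
    rw [e1] at hcp
    omega
  -- h6 : L1 ≤ leaves.card
  have h6 : L1 ≤ T.leaves.card := by
    rw [hL1]; exact Finset.card_filter_le _ _
  constructor
  · have : ((if ℓ ⟨0, hn⟩ = 1 then (1:ℤ) else 0)) = (r : ℤ) := by
      rw [hr]; split_ifs <;> simp
    rw [this]
    push_cast
    omega
  · have hr' : r ≤ 1 := by rw [hr]; split_ifs <;> omega
    push_cast
    omega
end
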